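/- (Theorem 3.2.) Let 0 = x₀ < ⋯ < x_{n+1} = 1 be a grid, ε, b, c reals, f : [0,1] → ℝ continuous, A = (a(φⱼ, φᵢ))_{1≤i,j≤n} invertible, and Uⁿ ∈ ℝⁿ the solution of A·Uⁿ = F with Fⱼ = ∫₀¹ f·φⱼ. Let xₙ < s₁ < s₂ < ⋯ < s_m < 1 and let (u₁, …, uₙ, u_{s₁}, …, u_{s_m}) solve the refined Galerkin system with nodal basis φ₁, …, φ_{n−1}, φ̃ₙ, φ_{s₁}, …, φ_{s_m}. Then Uⁿ − (u₁, …, uₙ) = C·A⁻¹eₙ, where eₙ = (0, …, 0, 1)ᵗ, pᵢ = (1 − sᵢ)/(1 − xₙ), and C = Σ_{i=1}^{m} (u_{sᵢ} − pᵢ·uₙ)·a(φ_{sᵢ}, φₙ). Consequently, for each 2 ≤ i ≤ n for which a sign change (Uⁿ_{i−1} − u_{i−1})(Uⁿᵢ − uᵢ) < 0 occurs, the intersection point of the two piecewise linear solutions in (x_{i−1}, xᵢ) is independent of m and of the distribution of the added points s₁, …, s_m. -/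

import Mathlib

open Matrix MeasureTheory

/-- The hat (tent) function with support `[l, r]`, peak value 1 at `m`,
equal to `(t - l)/(m - l)` on `[l, m]` and `(r - t)/(r - m)` on `[m, r]`. -/
noncomputable def hat3 (l m r t : ℝ) : ℝ :=
  if l ≤ t ∧ t ≤ m then (t - l) / (m - l)
  else if m ≤ t ∧ t ≤ r then (r - t) / (r - m)
  else 0

/-- The piecewise derivative of `hat3 l m r`. -/
noncomputable def hat3D (l m r t : ℝ) : ℝ :=
  if l < t ∧ t < m then 1 / (m - l)
  else if m < t ∧ t < r then -(1 / (r - m))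
  else 0

/-- The hat function at node `i` of the grid `y`. -/
noncomputable def hatFn (y : ℕ → ℝ) (i : ℕ) : ℝ → ℝ :=
  hat3 (y (i - 1)) (y i) (y (i + 1))

/-- The piecewise derivative of the hat function at node `i` of the grid `y`. -/
noncomputable def hatDeriv (y : ℕ → ℝ) (i : ℕ) : ℝ → ℝ :=
  hat3D (y (i - 1)) (y i) (y (i + 1))

/-- The bilinear form `a(u, v) = ε∫₀¹ u'v' + b∫₀¹ u v' + c∫₀¹ u v`, where the (piecewise)
derivatives `u'`, `v'` are supplied explicitly as `uD`, `vD`. -/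
noncomputable def bform (ε b c : ℝ) (u uD v vD : ℝ → ℝ) : ℝ :=
  ε * (∫ t in (0:ℝ)..1, uD t * vD t)
    + b * (∫ t in (0:ℝ)..1, u t * vD t)
    + c * (∫ t in (0:ℝ)..1, u t * v t)

/-- `y` is a grid `0 = y₀ < y₁ < ⋯ < y_{N+1} = 1` with `N` interior nodes. -/
def IsGrid (y : ℕ → ℝ) (N : ℕ) : Prop :=
  y 0 = 0 ∧ y (N + 1) = 1 ∧ ∀ i ≤ N, y i < y (i + 1)

/-- The load `∫₀¹ f·φⱼ` for the grid `y`. -/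
noncomputable def load (f : ℝ → ℝ) (y : ℕ → ℝ) (j : ℕ) : ℝ :=
  ∫ t in (0:ℝ)..1, f t * hatFn y j t

/-- `w` (as coefficients at the interior nodes `y 1, …, y N`) is a Galerkin finite element
solution on the grid `y`: its `a`-pairing with every nodal basis hat function equals the
corresponding load. -/
def IsGalerkinSol (ε b c : ℝ) (f : ℝ → ℝ) (y : ℕ → ℝ) (N : ℕ) (w : ℕ → ℝ) : Prop :=
  ∀ j, 1 ≤ j → j ≤ N →
    (∑ i ∈ Finset.Icc 1 N,
        w i * bform ε b c (hatFn y i) (hatDeriv y i) (hatFn y j) (hatDeriv y j))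
      = load f y j

/-- The stiffness matrix `A` with `A i j = a(φ_{j+1}, φ_{i+1})` (`0`-based `Fin` indices
corresponding to the interior nodes `y 1, …, y n`). -/
noncomputable def stiff (ε b c : ℝ) (y : ℕ → ℝ) (n : ℕ) : Matrix (Fin n) (Fin n) ℝ :=
  fun i j => bform ε b c (hatFn y ((j : ℕ) + 1)) (hatDeriv y ((j : ℕ) + 1))
      (hatFn y ((i : ℕ) + 1)) (hatDeriv y ((i : ℕ) + 1))

/-- The affine function on `[α, β]` through `(α, ya)` and `(β, yb)`. -/
noncomputable def affInterp (α β ya yb t : ℝ) : ℝ :=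
  ya + (yb - ya) * (t - α) / (β - α)


/-! ### Toolkit -/

section Toolkit
open Classical

lemma II_of_bdd {g : ℝ → ℝ} {M : ℝ}
    (hm : AEStronglyMeasurable g (volume.restrict (Set.Ioc (0:ℝ) 1)))
    (hb : ∀ t ∈ Set.Ioc (0:ℝ) 1, |g t| ≤ M) : IntervalIntegrable g volume 0 1 := by
  rw [intervalIntegrable_iff, Set.uIoc_of_le zero_le_one]
  haveI : IsFiniteMeasure (volume.restrict (Set.Ioc (0:ℝ) 1)) := by
    constructor
    rw [Measure.restrict_apply_univ, Real.volume_Ioc]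
    exact ENNReal.ofReal_lt_top
  refine ⟨hm, HasFiniteIntegral.of_bounded (C := M) ?_⟩
  rw [ae_restrict_iff' measurableSet_Ioc]
  exact ae_of_all _ fun t ht => by simpa [Real.norm_eq_abs] using hb t ht

lemma setIcc (l m : ℝ) : {t : ℝ | l ≤ t ∧ t ≤ m} = Set.Icc l m := rfl
lemma setIoo (l m : ℝ) : {t : ℝ | l < t ∧ t < m} = Set.Ioo l m := rfl

lemma hat3_meas (l m r : ℝ) : Measurable (hat3 l m r) := by
  unfold hat3
  exact Measurable.ite (setIcc l m ▸ measurableSet_Icc)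
    (by fun_prop)
    (Measurable.ite (setIcc m r ▸ measurableSet_Icc) (by fun_prop) (by fun_prop))

lemma hat3D_meas (l m r : ℝ) : Measurable (hat3D l m r) := by
  unfold hat3D
  exact Measurable.ite (setIoo l m ▸ measurableSet_Ioo)
    (by fun_prop)
    (Measurable.ite (setIoo m r ▸ measurableSet_Ioo) (by fun_prop) (by fun_prop))

lemma hat3_abs_le_one (l m r t : ℝ) : |hat3 l m r t| ≤ 1 := by
  unfold hat3
  split_ifs with h1 h2
  · rcases eq_or_lt_of_le (le_trans h1.1 h1.2 : l ≤ m) with h | h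
    · have : t = l := le_antisymm (h ▸ h1.2) h1.1
      simp [this, ← h]
    · rw [abs_div, abs_of_nonneg (by linarith [h1.1]), abs_of_pos (by linarith : (0:ℝ) < m - l)]
      rw [div_le_one (by linarith)]; linarith [h1.2]
  · rcases eq_or_lt_of_le (le_trans h2.1 h2.2 : m ≤ r) with h | h
    · rw [← h]; simp
    · rw [abs_div, abs_of_nonneg (by linarith [h2.2]), abs_of_pos (by linarith : (0:ℝ) < r - m)]
      rw [div_le_one (by linarith)]; linarith [h2.1]
  · simp

lemma hat3D_abs_le (l m r t : ℝ) : |hat3D l m r t| ≤ max |1 / (m - l)| |1 / (r - m)| := by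
  unfold hat3D
  split_ifs
  · exact le_max_left _ _
  · rw [abs_neg]; exact le_max_right _ _
  · simp only [abs_zero]
    exact le_max_of_le_left (abs_nonneg _)

lemma hat3_zero_left {l m r t : ℝ} (hlm : l < m) (h : t ≤ l) : hat3 l m r t = 0 := by
  unfold hat3
  split_ifs with h1 h2
  · have : t = l := le_antisymm h h1.1
    simp [this]
  · linarith [h2.1]
  · rfl

lemma hat3_zero_right {l m r t : ℝ} (hmr : m < r) (h : r ≤ t) : hat3 l m r t = 0 := by
  unfold hat3
  split_ifs with h1 h2
  · linarith [h1.2]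
  · have : t = r := le_antisymm h2.2 h
    simp [this]
  · rfl

lemma hat3D_zero_left {l m r t : ℝ} (hlm : l ≤ m) (h : t ≤ l) : hat3D l m r t = 0 := by
  unfold hat3D
  split_ifs with h1 h2
  · linarith [h1.1]
  · linarith [h2.1]
  · rfl

lemma hat3D_zero_right {l m r t : ℝ} (hmr : m ≤ r) (h : r ≤ t) : hat3D l m r t = 0 := by
  unfold hat3D
  split_ifs with h1 h2
  · linarith [h1.2]
  · linarith [h2.2]
  · rfl

lemma hat3_left {l m r t : ℝ} (h1 : l ≤ t) (h2 : t ≤ m) : hat3 l m r t = (t - l) / (m - l) := by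
  unfold hat3; rw [if_pos ⟨h1, h2⟩]

lemma hat3_right {l m r t : ℝ} (hlm : l < m) (hmr : m < r) (h1 : m ≤ t) (h2 : t ≤ r) :
    hat3 l m r t = (r - t) / (r - m) := by
  unfold hat3
  split_ifs with h3 h4
  · have : t = m := le_antisymm h3.2 h1
    rw [this, div_self (by linarith : m - l ≠ 0), div_self (by linarith : r - m ≠ 0)]
  · rfl
  · exact absurd ⟨h1, h2⟩ h4

lemma hat3D_left {l m r t : ℝ} (h1 : l < t) (h2 : t < m) : hat3D l m r t = 1 / (m - l) := by
  unfold hat3D; rw [if_pos ⟨h1, h2⟩]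

lemma hat3D_right {l m r t : ℝ} (h1 : m < t) (h2 : t < r) :
    hat3D l m r t = -(1 / (r - m)) := by
  unfold hat3D
  rw [if_neg (by rintro ⟨_, h⟩; linarith), if_pos ⟨h1, h2⟩]

lemma hat3_low {l m r t : ℝ} (hlm : l < m) (h : t ≤ m) :
    hat3 l m r t = if l ≤ t then (t - l) / (m - l) else 0 := by
  by_cases hl : l ≤ t
  · rw [if_pos hl]; exact hat3_left hl h
  · rw [if_neg hl]; exact hat3_zero_left hlm (le_of_lt (not_le.mp hl))

lemma grid_lt {y : ℕ → ℝ} {N : ℕ} (hy : IsGrid y N) {i j : ℕ} (hij : i < j) (hj : j ≤ N + 1) :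
    y i < y j := by
  induction j with
  | zero => omega
  | succ k ih =>
    rcases Nat.lt_succ_iff_lt_or_eq.mp hij with h | h
    · exact lt_trans (ih h (by omega)) (hy.2.2 k (by omega))
    · exact h ▸ hy.2.2 k (by omega)

lemma grid_le {y : ℕ → ℝ} {N : ℕ} (hy : IsGrid y N) {i j : ℕ} (hij : i ≤ j) (hj : j ≤ N + 1) :
    y i ≤ y j := by
  rcases Nat.lt_or_ge i j with h | h
  · exact le_of_lt (grid_lt hy h hj)
  · have : i = j := le_antisymm hij h
    exact this ▸ le_refl _

end Toolkit

section Decomp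
open Classical

lemma decomp_hat {x y : ℕ → ℝ} {n m : ℕ} (hn : 1 ≤ n) (hm : 1 ≤ m)
    (hx : IsGrid x n) (hy : IsGrid y (n + m)) (hagree : ∀ i ≤ n, y i = x i) (t : ℝ) :
    hatFn x n t = hatFn y n t
      + ∑ k ∈ Finset.Icc 1 m, (1 - y (n + k)) / (1 - x n) * hatFn y (n + k) t := by
  have hyn : y n = x n := hagree n le_rfl
  have hyn1 : y (n - 1) = x (n - 1) := hagree (n - 1) (by omega)
  have hx1 : x (n + 1) = 1 := hx.2.1
  have hy1 : y (n + m + 1) = 1 := hy.2.1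
  have hxlt : x (n - 1) < x n := by
    have h := hx.2.2 (n - 1) (by omega)
    rwa [show n - 1 + 1 = n by omega] at h
  have hxn1 : x n < 1 := by
    have h := hx.2.2 n le_rfl
    rwa [hx1] at h
  have h1xn : (0:ℝ) < 1 - x n := by linarith
  rcases le_or_gt t (y n) with hA | hB
  · -- t ≤ y n : all refined hats at n+k vanish, the two n-hats agree
    rw [Finset.sum_eq_zero (fun k hk => ?_), add_zero]
    · show hat3 (x (n-1)) (x n) (x (n+1)) t = hat3 (y (n-1)) (y n) (y (n+1)) t
      rw [hyn1, hyn, hat3_low hxlt (hyn ▸ hA), hat3_low hxlt (hyn ▸ hA)]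
    · simp only [Finset.mem_Icc] at hk
      have h0 : hatFn y (n + k) t = 0 :=
        hat3_zero_left (grid_lt hy (by omega) (by omega))
          (le_trans hA (grid_le hy (by omega) (by omega)))
      rw [h0, mul_zero]
  rcases le_or_gt t 1 with hC | hD
  swap
  · -- 1 < t : everything vanishes
    have hL : hatFn x n t = 0 := hat3_zero_right (hx1 ▸ hxn1) (hx1 ▸ le_of_lt hD)
    have hY : hatFn y n t = 0 := hat3_zero_right (grid_lt hy (by omega) (by omega))
      (le_trans (le_trans (grid_le hy (by omega) (by omega)) (le_of_eq hy1)) (le_of_lt hD))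
    rw [hL, hY, Finset.sum_eq_zero (fun k hk => ?_), add_zero]
    · simp only [Finset.mem_Icc] at hk
      have h0 : hatFn y (n + k) t = 0 := hat3_zero_right (grid_lt hy (by omega) (by omega))
        (le_trans (le_trans (grid_le hy (by omega) (by omega)) (le_of_eq hy1)) (le_of_lt hD))
      rw [h0, mul_zero]
  · -- y n < t ≤ 1
    set j := Nat.findGreatest (fun k => y (n + k) < t) m with hjdef
    have hjle : j ≤ m := Nat.findGreatest_le m
    have hjlt : y (n + j) < t :=
      Nat.findGreatest_spec (P := fun k => y (n + k) < t) (Nat.zero_le m) (show y (n + 0) < t by simpa using hB)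
    have hjr : t ≤ y (n + j + 1) := by
      rcases Nat.lt_or_ge j m with h | h
      · by_contra hc
        push_neg at hc
        exact Nat.findGreatest_is_greatest (Nat.lt_succ_self j) (by omega) hc
      · have hjm : j = m := le_antisymm hjle h
        rw [hjm, hy1]; exact hC
    have hL : hatFn x n t = (1 - t) / (1 - x n) := by
      show hat3 (x (n-1)) (x n) (x (n+1)) t = _
      rw [hx1]
      exact hat3_right hxlt hxn1 (le_of_lt (hyn ▸ hB)) hC
    have hsub : (∑ k ∈ Finset.Icc 1 m, (1 - y (n + k)) / (1 - x n) * hatFn y (n + k) t)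
        = ∑ k ∈ Finset.Icc 1 m ∩ {j, j + 1},
            (1 - y (n + k)) / (1 - x n) * hatFn y (n + k) t := by
      refine (Finset.sum_subset Finset.inter_subset_left (fun k hk hnk => ?_)).symm
      have hknot : k ∉ ({j, j + 1} : Finset ℕ) := fun hmem => hnk (Finset.mem_inter.mpr ⟨hk, hmem⟩)
      simp only [Finset.mem_insert, Finset.mem_singleton] at hknot
      push_neg at hknot
      simp only [Finset.mem_Icc] at hk
      rcases Nat.lt_or_ge k j with h | h
      · have h0 : hatFn y (n + k) t = 0 := hat3_zero_right (grid_lt hy (by omega) (by omega))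
          (le_of_lt (lt_of_le_of_lt (grid_le hy (by omega) (by omega)) hjlt))
        rw [h0, mul_zero]
      · have hk2 : j + 2 ≤ k := by omega
        have h0 : hatFn y (n + k) t = 0 := hat3_zero_left (grid_lt hy (by omega) (by omega))
          (le_trans hjr (grid_le hy (by omega) (by omega)))
        rw [h0, mul_zero]
    rw [hL, hsub]
    rcases Nat.eq_zero_or_pos j with hj0 | hjpos
    · -- j = 0 : only k = 1 contributes; hatFn y n is on its right piece
      have hset : Finset.Icc 1 m ∩ {j, j + 1} = {1} := by
        ext k
        simp only [Finset.mem_inter, Finset.mem_Icc, Finset.mem_insert, Finset.mem_singleton, hj0]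
        omega
      have hjlt' : y n < t := hB
      have hjr' : t ≤ y (n + 1) := by rw [hj0] at hjr; simpa using hjr
      have hY : hatFn y n t = (y (n+1) - t) / (y (n+1) - y n) :=
        hat3_right (hyn1 ▸ hyn ▸ hxlt) (grid_lt hy (by omega) (by omega)) (le_of_lt hB) hjr'
      have hK : hatFn y (n + 1) t = (t - y n) / (y (n+1) - y n) := by
        show hat3 (y (n + 1 - 1)) (y (n + 1)) (y (n + 1 + 1)) t = _
        rw [show n + 1 - 1 = n by omega]
        exact hat3_left (le_of_lt hB) hjr'
      rw [hset, Finset.sum_singleton, hY, hK]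
      have hd : y (n+1) - y n ≠ 0 := by
        have := grid_lt hy (show n < n + 1 by omega) (by omega); linarith
      rw [hyn] at hd ⊢
      field_simp [hd, ne_of_gt h1xn]
      ring
    · rcases Nat.lt_or_ge j m with hjm | hjm
      · -- 1 ≤ j < m : only k = j, j+1 contribute
        have hset : Finset.Icc 1 m ∩ {j, j + 1} = {j, j + 1} := by
          ext k
          simp only [Finset.mem_inter, Finset.mem_Icc, Finset.mem_insert, Finset.mem_singleton]
          omega
        have hY : hatFn y n t = 0 := hat3_zero_right (grid_lt hy (by omega) (by omega))
          (le_of_lt (lt_of_le_of_lt (grid_le hy (by omega) (by omega)) hjlt))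
        have hJ : hatFn y (n + j) t = (y (n+j+1) - t) / (y (n+j+1) - y (n+j)) := by
          show hat3 (y (n + j - 1)) (y (n + j)) (y (n + j + 1)) t = _
          exact hat3_right (grid_lt hy (by omega) (by omega)) (grid_lt hy (by omega) (by omega))
            (le_of_lt hjlt) hjr
        have hJ1 : hatFn y (n + (j+1)) t = (t - y (n+j)) / (y (n+j+1) - y (n+j)) := by
          show hat3 (y (n + (j + 1) - 1)) (y (n + (j+1))) (y (n + (j+1) + 1)) t = _
          rw [show n + (j + 1) - 1 = n + j by omega, show n + (j+1) = n + j + 1 by omega]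
          exact hat3_left (le_of_lt hjlt) hjr
        rw [hset, Finset.sum_pair (by omega : j ≠ j + 1), hY, hJ, hJ1]
        have hd : y (n+j+1) - y (n+j) ≠ 0 := by
          have := grid_lt hy (show n + j < n + j + 1 by omega) (by omega); linarith
        rw [show n + (j+1) = n + j + 1 by omega]
        field_simp [hd, ne_of_gt h1xn]
        ring
      · -- j = m : only k = m contributes
        have hjm' : j = m := le_antisymm hjle hjm
        have hset : Finset.Icc 1 m ∩ {j, j + 1} = {m} := by
          ext k
          simp only [Finset.mem_inter, Finset.mem_Icc, Finset.mem_insert, Finset.mem_singleton,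
            hjm']
          omega
        have hY : hatFn y n t = 0 := hat3_zero_right (grid_lt hy (by omega) (by omega))
          (le_of_lt (lt_of_le_of_lt (grid_le hy (by omega) (by omega)) (hjm' ▸ hjlt)))
        have hJ : hatFn y (n + m) t = (1 - t) / (1 - y (n+m)) := by
          show hat3 (y (n + m - 1)) (y (n + m)) (y (n + m + 1)) t = _
          rw [hy1]
          refine hat3_right (grid_lt hy (by omega) (by omega)) ?_ (le_of_lt (hjm' ▸ hjlt)) hC
          have := grid_lt hy (show n + m < n + m + 1 by omega) (by omega)
          rwa [hy1] at this
        rw [hset, Finset.sum_singleton, hY, hJ]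
        have hd : (1:ℝ) - y (n+m) ≠ 0 := by
          have := grid_lt hy (show n + m < n + m + 1 by omega) (by omega)
          rw [hy1] at this; linarith
        field_simp [hd, ne_of_gt h1xn]
        ring

lemma hat3D_low {l m r t : ℝ} (h : t < m) : hat3D l m r t = if l < t then 1 / (m - l) else 0 := by
  by_cases hl : l < t
  · rw [if_pos hl]; exact hat3D_left hl h
  · rw [if_neg hl]
    unfold hat3D
    rw [if_neg (fun hc => hl hc.1), if_neg (fun hc => absurd hc.1 (not_lt.mpr (le_of_lt h)))]

lemma decomp_deriv {x y : ℕ → ℝ} {n m : ℕ} (hn : 1 ≤ n) (hm : 1 ≤ m)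
    (hx : IsGrid x n) (hy : IsGrid y (n + m)) (hagree : ∀ i ≤ n, y i = x i) (t : ℝ)
    (ht : ∀ k ≤ m + 1, t ≠ y (n + k)) :
    hatDeriv x n t = hatDeriv y n t
      + ∑ k ∈ Finset.Icc 1 m, (1 - y (n + k)) / (1 - x n) * hatDeriv y (n + k) t := by
  have hyn : y n = x n := hagree n le_rfl
  have hyn1 : y (n - 1) = x (n - 1) := hagree (n - 1) (by omega)
  have hx1 : x (n + 1) = 1 := hx.2.1
  have hy1 : y (n + m + 1) = 1 := hy.2.1
  have hxlt : x (n - 1) < x n := by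
    have h := hx.2.2 (n - 1) (by omega)
    rwa [show n - 1 + 1 = n by omega] at h
  have hxn1 : x n < 1 := by
    have h := hx.2.2 n le_rfl
    rwa [hx1] at h
  have h1xn : (0:ℝ) < 1 - x n := by linarith
  rcases lt_trichotomy t (y n) with hA | hA | hB
  · -- t < y n : refined derivs vanish, the two n-derivs agree
    rw [Finset.sum_eq_zero (fun k hk => ?_), add_zero]
    · show hat3D (x (n-1)) (x n) (x (n+1)) t = hat3D (y (n-1)) (y n) (y (n+1)) t
      rw [hyn1, hyn, hat3D_low (hyn ▸ hA), hat3D_low (hyn ▸ hA)]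
    · simp only [Finset.mem_Icc] at hk
      have h0 : hatDeriv y (n + k) t = 0 :=
        hat3D_zero_left (le_of_lt (grid_lt hy (by omega) (by omega)))
          (le_trans (le_of_lt hA) (grid_le hy (by omega) (by omega)))
      rw [h0, mul_zero]
  · exact absurd (by simpa using hA) (ht 0 (by omega))
  rcases lt_trichotomy t 1 with hC | hC | hD
  rotate_left
  · exact absurd (hC.trans hy1.symm) (ht (m+1) le_rfl)
  · -- 1 < t : everything vanishes
    have hL : hatDeriv x n t = 0 :=
      hat3D_zero_right (hx1 ▸ le_of_lt hxn1) (hx1 ▸ le_of_lt hD)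
    have hY : hatDeriv y n t = 0 :=
      hat3D_zero_right (le_of_lt (grid_lt hy (by omega) (by omega)))
        (le_trans (le_trans (grid_le hy (by omega) (by omega)) (le_of_eq hy1)) (le_of_lt hD))
    rw [hL, hY, Finset.sum_eq_zero (fun k hk => ?_), add_zero]
    · simp only [Finset.mem_Icc] at hk
      have h0 : hatDeriv y (n + k) t = 0 :=
        hat3D_zero_right (le_of_lt (grid_lt hy (by omega) (by omega)))
          (le_trans (le_trans (grid_le hy (by omega) (by omega)) (le_of_eq hy1)) (le_of_lt hD))
      rw [h0, mul_zero]
  · -- y n < t < 1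
    set j := Nat.findGreatest (fun k => y (n + k) < t) m with hjdef
    have hjle : j ≤ m := Nat.findGreatest_le m
    have hjlt : y (n + j) < t :=
      Nat.findGreatest_spec (P := fun k => y (n + k) < t) (Nat.zero_le m)
        (show y (n + 0) < t by simpa using hB)
    have hjr0 : t ≤ y (n + j + 1) := by
      rcases Nat.lt_or_ge j m with h | h
      · by_contra hc
        push_neg at hc
        exact Nat.findGreatest_is_greatest (Nat.lt_succ_self j) (by omega) hc
      · have hjm : j = m := le_antisymm hjle h
        rw [hjm, hy1]; exact le_of_lt hC
    have hjr : t < y (n + j + 1) :=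
      lt_of_le_of_ne hjr0 (ht (j+1) (by omega))
    have hL : hatDeriv x n t = -(1 / (1 - x n)) := by
      show hat3D (x (n-1)) (x n) (x (n+1)) t = _
      rw [hx1]
      exact hat3D_right (hyn ▸ hB) hC
    have hsub : (∑ k ∈ Finset.Icc 1 m, (1 - y (n + k)) / (1 - x n) * hatDeriv y (n + k) t)
        = ∑ k ∈ Finset.Icc 1 m ∩ {j, j + 1},
            (1 - y (n + k)) / (1 - x n) * hatDeriv y (n + k) t := by
      refine (Finset.sum_subset Finset.inter_subset_left (fun k hk hnk => ?_)).symm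
      have hknot : k ∉ ({j, j + 1} : Finset ℕ) := fun hmem => hnk (Finset.mem_inter.mpr ⟨hk, hmem⟩)
      simp only [Finset.mem_insert, Finset.mem_singleton] at hknot
      push_neg at hknot
      simp only [Finset.mem_Icc] at hk
      rcases Nat.lt_or_ge k j with h | h
      · have h0 : hatDeriv y (n + k) t = 0 :=
          hat3D_zero_right (le_of_lt (grid_lt hy (by omega) (by omega)))
            (le_of_lt (lt_of_le_of_lt (grid_le hy (by omega) (by omega)) hjlt))
        rw [h0, mul_zero]
      · have hk2 : j + 2 ≤ k := by omega
        have h0 : hatDeriv y (n + k) t = 0 :=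
          hat3D_zero_left (le_of_lt (grid_lt hy (by omega) (by omega)))
            (le_trans (le_of_lt hjr) (grid_le hy (by omega) (by omega)))
        rw [h0, mul_zero]
    rw [hL, hsub]
    rcases Nat.eq_zero_or_pos j with hj0 | hjpos
    · have hset : Finset.Icc 1 m ∩ {j, j + 1} = {1} := by
        ext k
        simp only [Finset.mem_inter, Finset.mem_Icc, Finset.mem_insert, Finset.mem_singleton, hj0]
        omega
      have hjr' : t < y (n + 1) := by rw [hj0] at hjr; simpa using hjr
      have hY : hatDeriv y n t = -(1 / (y (n+1) - y n)) := hat3D_right hB hjr'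
      have hK : hatDeriv y (n + 1) t = 1 / (y (n+1) - y n) := by
        show hat3D (y (n + 1 - 1)) (y (n + 1)) (y (n + 1 + 1)) t = _
        rw [show n + 1 - 1 = n by omega]
        exact hat3D_left hB hjr'
      rw [hset, Finset.sum_singleton, hY, hK]
      have hd : y (n+1) - y n ≠ 0 := by
        have := grid_lt hy (show n < n + 1 by omega) (by omega); linarith
      rw [hyn] at hd ⊢
      field_simp [hd, ne_of_gt h1xn]
      ring
    · rcases Nat.lt_or_ge j m with hjm | hjm
      · have hset : Finset.Icc 1 m ∩ {j, j + 1} = {j, j + 1} := by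
          ext k
          simp only [Finset.mem_inter, Finset.mem_Icc, Finset.mem_insert, Finset.mem_singleton]
          omega
        have hY : hatDeriv y n t = 0 :=
          hat3D_zero_right (le_of_lt (grid_lt hy (by omega) (by omega)))
            (le_of_lt (lt_of_le_of_lt (grid_le hy (by omega) (by omega)) hjlt))
        have hJ : hatDeriv y (n + j) t = -(1 / (y (n+j+1) - y (n+j))) := by
          show hat3D (y (n + j - 1)) (y (n + j)) (y (n + j + 1)) t = _
          exact hat3D_right hjlt hjr
        have hJ1 : hatDeriv y (n + (j+1)) t = 1 / (y (n+j+1) - y (n+j)) := by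
          show hat3D (y (n + (j + 1) - 1)) (y (n + (j+1))) (y (n + (j+1) + 1)) t = _
          rw [show n + (j + 1) - 1 = n + j by omega, show n + (j+1) = n + j + 1 by omega]
          exact hat3D_left hjlt hjr
        rw [hset, Finset.sum_pair (by omega : j ≠ j + 1), hY, hJ, hJ1]
        have hd : y (n+j+1) - y (n+j) ≠ 0 := by
          have := grid_lt hy (show n + j < n + j + 1 by omega) (by omega); linarith
        rw [show n + (j+1) = n + j + 1 by omega]
        field_simp [hd, ne_of_gt h1xn]
        ring
      · have hjm' : j = m := le_antisymm hjle hjm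
        have hset : Finset.Icc 1 m ∩ {j, j + 1} = {m} := by
          ext k
          simp only [Finset.mem_inter, Finset.mem_Icc, Finset.mem_insert, Finset.mem_singleton,
            hjm']
          omega
        have hY : hatDeriv y n t = 0 :=
          hat3D_zero_right (le_of_lt (grid_lt hy (by omega) (by omega)))
            (le_of_lt (lt_of_le_of_lt (grid_le hy (by omega) (by omega)) (hjm' ▸ hjlt)))
        have hJ : hatDeriv y (n + m) t = -(1 / (1 - y (n+m))) := by
          show hat3D (y (n + m - 1)) (y (n + m)) (y (n + m + 1)) t = _
          rw [hy1]
          exact hat3D_right (hjm' ▸ hjlt) hC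
        rw [hset, Finset.sum_singleton, hY, hJ]
        have hd : (1:ℝ) - y (n+m) ≠ 0 := by
          have := grid_lt hy (show n + m < n + m + 1 by omega) (by omega)
          rw [hy1] at this; linarith
        field_simp [hd, ne_of_gt h1xn]
        ring

end Decomp

section Ints
open Classical

lemma integral_expand_core {F G0 : ℝ → ℝ} {S : Finset ℕ} {p : ℕ → ℝ} {G : ℕ → ℝ → ℝ}
    (hae : ∀ᵐ t ∂(volume.restrict (Set.Ioc (0:ℝ) 1)), F t = G0 t + ∑ k ∈ S, p k * G k t)
    (h0 : IntervalIntegrable G0 volume 0 1)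
    (hk : ∀ k ∈ S, IntervalIntegrable (G k) volume 0 1) :
    ∫ t in (0:ℝ)..1, F t
      = (∫ t in (0:ℝ)..1, G0 t) + ∑ k ∈ S, p k * ∫ t in (0:ℝ)..1, G k t := by
  have h1 : ∫ t in (0:ℝ)..1, F t
      = ∫ t in (0:ℝ)..1, (G0 t + ∑ k ∈ S, p k * G k t) := by
    apply intervalIntegral.integral_congr_ae
    rw [Set.uIoc_of_le zero_le_one]
    exact (ae_restrict_iff' measurableSet_Ioc).mp hae
  have h2 : IntervalIntegrable (fun t => ∑ k ∈ S, p k * G k t) volume 0 1 := by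
    have := IntervalIntegrable.sum S (f := fun k t => p k * G k t) (μ := volume) (a := (0:ℝ))
      (b := 1) (fun k hkS => (hk k hkS).const_mul (p k))
    have heq : (fun t => ∑ k ∈ S, p k * G k t) = ∑ k ∈ S, (fun t => p k * G k t) := by
      ext t; simp
    rw [heq]; exact this
  rw [h1, intervalIntegral.integral_add h0 h2,
    intervalIntegral.integral_finset_sum (f := fun k t => p k * G k t)
      (fun k hkS => (hk k hkS).const_mul (p k))]
  congr 1
  exact Finset.sum_congr rfl fun k hkS => intervalIntegral.integral_const_mul _ _

lemma hatFn_meas (y : ℕ → ℝ) (i : ℕ) : Measurable (hatFn y i) := hat3_meas _ _ _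
lemma hatDeriv_meas (y : ℕ → ℝ) (i : ℕ) : Measurable (hatDeriv y i) := hat3D_meas _ _ _
lemma hatFn_bd (y : ℕ → ℝ) (i : ℕ) (t : ℝ) : |hatFn y i t| ≤ 1 := hat3_abs_le_one _ _ _ _
lemma hatDeriv_bd (y : ℕ → ℝ) (i : ℕ) : ∃ M, ∀ t, |hatDeriv y i t| ≤ M :=
  ⟨_, fun t => hat3D_abs_le _ _ _ t⟩

lemma II_mul {g h : ℝ → ℝ} (hg : Measurable g) (hh : Measurable h)
    {Mg Mh : ℝ} (bg : ∀ t, |g t| ≤ Mg) (bh : ∀ t, |h t| ≤ Mh) :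
    IntervalIntegrable (fun t => g t * h t) volume 0 1 := by
  refine II_of_bdd ((hg.mul hh).aestronglyMeasurable) (M := Mg * Mh) fun t _ => ?_
  rw [abs_mul]
  exact mul_le_mul (bg t) (bh t) (abs_nonneg _) (le_trans (abs_nonneg _) (bg t))

lemma II_f_mul {f g : ℝ → ℝ} (hf : ContinuousOn f (Set.Icc 0 1)) (hg : Measurable g)
    {Mg : ℝ} (bg : ∀ t, |g t| ≤ Mg) :
    IntervalIntegrable (fun t => f t * g t) volume 0 1 := by
  obtain ⟨Mf, hMf⟩ := isCompact_Icc.exists_bound_of_continuousOn hf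
  have hfm : AEStronglyMeasurable f (volume.restrict (Set.Ioc (0:ℝ) 1)) :=
    (hf.mono Set.Ioc_subset_Icc_self).aestronglyMeasurable measurableSet_Ioc
  refine II_of_bdd (hfm.mul hg.aestronglyMeasurable) (M := Mf * Mg) fun t ht => ?_
  rw [abs_mul]
  have h1 : |f t| ≤ Mf := hMf t (Set.Ioc_subset_Icc_self ht)
  exact mul_le_mul h1 (bg t) (abs_nonneg _) (le_trans (abs_nonneg _) h1)

end Ints

section BF
open Classical

lemma hatFn_congr {x y : ℕ → ℝ} {n : ℕ} (hagree : ∀ i ≤ n, y i = x i) {i : ℕ}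
    (hi : i + 1 ≤ n) : hatFn y i = hatFn x i ∧ hatDeriv y i = hatDeriv x i := by
  unfold hatFn hatDeriv
  rw [hagree (i-1) (by omega), hagree i (by omega), hagree (i+1) hi]
  exact ⟨rfl, rfl⟩

lemma bform_disjoint {ε b c : ℝ} {y : ℕ → ℝ} {N : ℕ} (hy : IsGrid y N) {i j : ℕ}
    (h1i : 1 ≤ i) (hiN : i ≤ N) (h1j : 1 ≤ j) (hjN : j ≤ N) (hij : i + 2 ≤ j ∨ j + 2 ≤ i) :
    bform ε b c (hatFn y i) (hatDeriv y i) (hatFn y j) (hatDeriv y j) = 0 := by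
  have key : ∀ i j : ℕ, 1 ≤ i → i ≤ N → 1 ≤ j → j ≤ N → i + 2 ≤ j → ∀ t : ℝ,
      (hatFn y i t = 0 ∧ hatDeriv y i t = 0) ∨ (hatFn y j t = 0 ∧ hatDeriv y j t = 0) := by
    intro i j h1i hiN h1j hjN hij t
    rcases le_or_gt t (y (j - 1)) with h | h
    · exact Or.inr ⟨hat3_zero_left (grid_lt hy (by omega) (by omega)) h,
        hat3D_zero_left (le_of_lt (grid_lt hy (by omega) (by omega))) h⟩
    · have hle : y (i + 1) ≤ y (j - 1) := grid_le hy (by omega) (by omega)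
      exact Or.inl ⟨hat3_zero_right (grid_lt hy (by omega) (by omega)) (le_of_lt (lt_of_le_of_lt hle h)),
        hat3D_zero_right (le_of_lt (grid_lt hy (by omega) (by omega))) (le_of_lt (lt_of_le_of_lt hle h))⟩
  have hkey : ∀ t : ℝ,
      (hatFn y i t = 0 ∧ hatDeriv y i t = 0) ∨ (hatFn y j t = 0 ∧ hatDeriv y j t = 0) := by
    rcases hij with h | h
    · exact key i j h1i hiN h1j hjN h
    · intro t
      exact (key j i h1j hjN h1i hiN h t).symm
  unfold bform
  have e1 : (fun t => hatDeriv y i t * hatDeriv y j t) = fun _ => (0:ℝ) := by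
    funext t
    rcases hkey t with ⟨_, h⟩ | ⟨_, h⟩
    · rw [h, zero_mul]
    · rw [h, mul_zero]
  have e2 : (fun t => hatFn y i t * hatDeriv y j t) = fun _ => (0:ℝ) := by
    funext t
    rcases hkey t with ⟨h, _⟩ | ⟨_, h⟩
    · rw [h, zero_mul]
    · rw [h, mul_zero]
  have e3 : (fun t => hatFn y i t * hatFn y j t) = fun _ => (0:ℝ) := by
    funext t
    rcases hkey t with ⟨h, _⟩ | ⟨h, _⟩
    · rw [h, zero_mul]
    · rw [h, mul_zero]
  rw [e1, e2, e3]
  simp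

lemma decomp_deriv_ae {x y : ℕ → ℝ} {n m : ℕ} (hn : 1 ≤ n) (hm : 1 ≤ m)
    (hx : IsGrid x n) (hy : IsGrid y (n + m)) (hagree : ∀ i ≤ n, y i = x i) :
    ∀ᵐ t ∂(volume.restrict (Set.Ioc (0:ℝ) 1)),
      hatDeriv x n t = hatDeriv y n t
        + ∑ k ∈ Finset.Icc 1 m, (1 - y (n + k)) / (1 - x n) * hatDeriv y (n + k) t := by
  have hE : volume (⋃ k ∈ Finset.range (m+2), ({y (n+k)} : Set ℝ)) = 0 := by
    have hfin : (⋃ k ∈ Finset.range (m+2), ({y (n+k)} : Set ℝ)).Finite :=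
      Set.Finite.biUnion (Finset.finite_toSet _) (fun _ _ => Set.finite_singleton _)
    exact hfin.measure_zero volume
  have h0 : ∀ᵐ t ∂(volume : Measure ℝ), t ∉ ⋃ k ∈ Finset.range (m+2), ({y (n+k)} : Set ℝ) :=
    measure_eq_zero_iff_ae_notMem.mp hE
  refine ae_restrict_of_ae (h0.mono fun t ht => ?_)
  apply decomp_deriv hn hm hx hy hagree
  intro k hk hteq
  apply ht
  have hk' : k ∈ Finset.range (m+2) := Finset.mem_range.mpr (by omega)
  have hmem : t ∈ ({y (n+k)} : Set ℝ) := by simp [hteq]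
  exact Set.mem_biUnion hk' hmem

lemma bform_expand_right {ε b c : ℝ} {x y : ℕ → ℝ} {n m : ℕ} (hn : 1 ≤ n) (hm : 1 ≤ m)
    (hx : IsGrid x n) (hy : IsGrid y (n + m)) (hagree : ∀ i ≤ n, y i = x i)
    {u uD : ℝ → ℝ} (hu : Measurable u) (huD : Measurable uD)
    {Mu MuD : ℝ} (hub : ∀ t, |u t| ≤ Mu) (huDb : ∀ t, |uD t| ≤ MuD) :
    bform ε b c u uD (hatFn x n) (hatDeriv x n)
      = bform ε b c u uD (hatFn y n) (hatDeriv y n)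
        + ∑ k ∈ Finset.Icc 1 m, (1 - y (n + k)) / (1 - x n)
            * bform ε b c u uD (hatFn y (n + k)) (hatDeriv y (n + k)) := by
  have hDae := decomp_deriv_ae hn hm hx hy hagree
  have e1 : ∫ t in (0:ℝ)..1, uD t * hatDeriv x n t
      = (∫ t in (0:ℝ)..1, uD t * hatDeriv y n t)
        + ∑ k ∈ Finset.Icc 1 m, (1 - y (n + k)) / (1 - x n)
            * ∫ t in (0:ℝ)..1, uD t * hatDeriv y (n+k) t := by
    apply integral_expand_core
    · refine hDae.mono fun t ht => ?_
      rw [ht, mul_add, Finset.mul_sum]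
      exact congrArg _ (Finset.sum_congr rfl fun k _ => by ring)
    · obtain ⟨M0, hM0⟩ := hatDeriv_bd y n
      exact II_mul huD (hatDeriv_meas y n) huDb hM0
    · intro k _
      obtain ⟨Mk, hMk⟩ := hatDeriv_bd y (n+k)
      exact II_mul huD (hatDeriv_meas _ _) huDb hMk
  have e2 : ∫ t in (0:ℝ)..1, u t * hatDeriv x n t
      = (∫ t in (0:ℝ)..1, u t * hatDeriv y n t)
        + ∑ k ∈ Finset.Icc 1 m, (1 - y (n + k)) / (1 - x n)
            * ∫ t in (0:ℝ)..1, u t * hatDeriv y (n+k) t := by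
    apply integral_expand_core
    · refine hDae.mono fun t ht => ?_
      rw [ht, mul_add, Finset.mul_sum]
      exact congrArg _ (Finset.sum_congr rfl fun k _ => by ring)
    · obtain ⟨M0, hM0⟩ := hatDeriv_bd y n
      exact II_mul hu (hatDeriv_meas y n) hub hM0
    · intro k _
      obtain ⟨Mk, hMk⟩ := hatDeriv_bd y (n+k)
      exact II_mul hu (hatDeriv_meas _ _) hub hMk
  have e3 : ∫ t in (0:ℝ)..1, u t * hatFn x n t
      = (∫ t in (0:ℝ)..1, u t * hatFn y n t)
        + ∑ k ∈ Finset.Icc 1 m, (1 - y (n + k)) / (1 - x n)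
            * ∫ t in (0:ℝ)..1, u t * hatFn y (n+k) t := by
    apply integral_expand_core
    · refine ae_of_all _ fun t => ?_
      rw [decomp_hat hn hm hx hy hagree t, mul_add, Finset.mul_sum]
      exact congrArg _ (Finset.sum_congr rfl fun k _ => by ring)
    · exact II_mul hu (hatFn_meas y n) hub (hatFn_bd y n)
    · intro k _
      exact II_mul hu (hatFn_meas _ _) hub (hatFn_bd _ _)
  have expand : ∀ k ∈ Finset.Icc 1 m,
      (1 - y (n + k)) / (1 - x n) * bform ε b c u uD (hatFn y (n+k)) (hatDeriv y (n+k))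
        = ε * ((1 - y (n + k)) / (1 - x n) * ∫ t in (0:ℝ)..1, uD t * hatDeriv y (n+k) t)
          + b * ((1 - y (n + k)) / (1 - x n) * ∫ t in (0:ℝ)..1, u t * hatDeriv y (n+k) t)
          + c * ((1 - y (n + k)) / (1 - x n) * ∫ t in (0:ℝ)..1, u t * hatFn y (n+k) t) :=
    fun k _ => by unfold bform; ring
  rw [Finset.sum_congr rfl expand, Finset.sum_add_distrib, Finset.sum_add_distrib,
    ← Finset.mul_sum, ← Finset.mul_sum, ← Finset.mul_sum]
  unfold bform
  rw [e1, e2, e3]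
  ring

lemma bform_expand_left {ε b c : ℝ} {x y : ℕ → ℝ} {n m : ℕ} (hn : 1 ≤ n) (hm : 1 ≤ m)
    (hx : IsGrid x n) (hy : IsGrid y (n + m)) (hagree : ∀ i ≤ n, y i = x i)
    {v vD : ℝ → ℝ} (hv : Measurable v) (hvD : Measurable vD)
    {Mv MvD : ℝ} (hvb : ∀ t, |v t| ≤ Mv) (hvDb : ∀ t, |vD t| ≤ MvD) :
    bform ε b c (hatFn x n) (hatDeriv x n) v vD
      = bform ε b c (hatFn y n) (hatDeriv y n) v vD
        + ∑ k ∈ Finset.Icc 1 m, (1 - y (n + k)) / (1 - x n)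
            * bform ε b c (hatFn y (n + k)) (hatDeriv y (n + k)) v vD := by
  have hDae := decomp_deriv_ae hn hm hx hy hagree
  have e1 : ∫ t in (0:ℝ)..1, hatDeriv x n t * vD t
      = (∫ t in (0:ℝ)..1, hatDeriv y n t * vD t)
        + ∑ k ∈ Finset.Icc 1 m, (1 - y (n + k)) / (1 - x n)
            * ∫ t in (0:ℝ)..1, hatDeriv y (n+k) t * vD t := by
    apply integral_expand_core
    · refine hDae.mono fun t ht => ?_
      rw [ht, add_mul, Finset.sum_mul]
      exact congrArg _ (Finset.sum_congr rfl fun k _ => by ring)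
    · obtain ⟨M0, hM0⟩ := hatDeriv_bd y n
      exact II_mul (hatDeriv_meas y n) hvD hM0 hvDb
    · intro k _
      obtain ⟨Mk, hMk⟩ := hatDeriv_bd y (n+k)
      exact II_mul (hatDeriv_meas _ _) hvD hMk hvDb
  have e2 : ∫ t in (0:ℝ)..1, hatFn x n t * vD t
      = (∫ t in (0:ℝ)..1, hatFn y n t * vD t)
        + ∑ k ∈ Finset.Icc 1 m, (1 - y (n + k)) / (1 - x n)
            * ∫ t in (0:ℝ)..1, hatFn y (n+k) t * vD t := by
    apply integral_expand_core
    · refine ae_of_all _ fun t => ?_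
      rw [decomp_hat hn hm hx hy hagree t, add_mul, Finset.sum_mul]
      exact congrArg _ (Finset.sum_congr rfl fun k _ => by ring)
    · exact II_mul (hatFn_meas y n) hvD (hatFn_bd y n) hvDb
    · intro k _
      exact II_mul (hatFn_meas _ _) hvD (hatFn_bd _ _) hvDb
  have e3 : ∫ t in (0:ℝ)..1, hatFn x n t * v t
      = (∫ t in (0:ℝ)..1, hatFn y n t * v t)
        + ∑ k ∈ Finset.Icc 1 m, (1 - y (n + k)) / (1 - x n)
            * ∫ t in (0:ℝ)..1, hatFn y (n+k) t * v t := by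
    apply integral_expand_core
    · refine ae_of_all _ fun t => ?_
      rw [decomp_hat hn hm hx hy hagree t, add_mul, Finset.sum_mul]
      exact congrArg _ (Finset.sum_congr rfl fun k _ => by ring)
    · exact II_mul (hatFn_meas y n) hv (hatFn_bd y n) hvb
    · intro k _
      exact II_mul (hatFn_meas _ _) hv (hatFn_bd _ _) hvb
  have expand : ∀ k ∈ Finset.Icc 1 m,
      (1 - y (n + k)) / (1 - x n) * bform ε b c (hatFn y (n+k)) (hatDeriv y (n+k)) v vD
        = ε * ((1 - y (n + k)) / (1 - x n) * ∫ t in (0:ℝ)..1, hatDeriv y (n+k) t * vD t)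
          + b * ((1 - y (n + k)) / (1 - x n) * ∫ t in (0:ℝ)..1, hatFn y (n+k) t * vD t)
          + c * ((1 - y (n + k)) / (1 - x n) * ∫ t in (0:ℝ)..1, hatFn y (n+k) t * v t) :=
    fun k _ => by unfold bform; ring
  rw [Finset.sum_congr rfl expand, Finset.sum_add_distrib, Finset.sum_add_distrib,
    ← Finset.mul_sum, ← Finset.mul_sum, ← Finset.mul_sum]
  unfold bform
  rw [e1, e2, e3]
  ring

lemma load_expand {f : ℝ → ℝ} (hf : ContinuousOn f (Set.Icc 0 1))
    {x y : ℕ → ℝ} {n m : ℕ} (hn : 1 ≤ n) (hm : 1 ≤ m)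
    (hx : IsGrid x n) (hy : IsGrid y (n + m)) (hagree : ∀ i ≤ n, y i = x i) :
    load f x n = load f y n
      + ∑ k ∈ Finset.Icc 1 m, (1 - y (n + k)) / (1 - x n) * load f y (n + k) := by
  unfold load
  apply integral_expand_core
  · refine ae_of_all _ fun t => ?_
    rw [decomp_hat hn hm hx hy hagree t, mul_add, Finset.mul_sum]
    exact congrArg _ (Finset.sum_congr rfl fun k _ => by ring)
  · exact II_f_mul hf (hatFn_meas y n) (hatFn_bd y n)
  · intro k _
    exact II_f_mul hf (hatFn_meas _ _) (hatFn_bd _ _)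

end BF

section Key
open Classical

lemma fin_sum_shift (n : ℕ) (g : ℕ → ℝ) :
    ∑ i : Fin n, g ((i : ℕ) + 1) = ∑ i ∈ Finset.Icc 1 n, g i := by
  rw [Fin.sum_univ_eq_sum_range (fun i => g (i+1))]
  induction n with
  | zero => simp
  | succ k ih => rw [Finset.sum_range_succ, ih, Finset.sum_Icc_succ_top (by omega)]

lemma sum_shift (n m : ℕ) (g : ℕ → ℝ) :
    ∑ i ∈ Finset.Icc 1 (n+m), g i
      = (∑ i ∈ Finset.Icc 1 n, g i) + ∑ k ∈ Finset.Icc 1 m, g (n+k) := by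
  have h1 : Finset.Icc 1 (n+m) = Finset.Ioc 0 (n+m) := by rw [← Finset.Icc_add_one_left_eq_Ioc, zero_add]
  have h2 : Finset.Icc 1 n = Finset.Ioc 0 n := by rw [← Finset.Icc_add_one_left_eq_Ioc, zero_add]
  rw [h1, h2, ← Finset.sum_Ioc_consecutive g (Nat.zero_le n) (Nat.le_add_right n m)]
  congr 1
  rw [show Finset.Ioc n (n+m) = Finset.Ioc (n+0) (n+m) from by rw [Nat.add_zero],
    ← Finset.map_add_left_Ioc, Finset.sum_map]
  rw [show Finset.Ioc 0 m = Finset.Icc 1 m from by rw [← Finset.Icc_add_one_left_eq_Ioc, zero_add]]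
  rfl

lemma key {n m : ℕ} (hn : 1 ≤ n) (hm : 1 ≤ m) {x y : ℕ → ℝ} {ε b c : ℝ} {f : ℝ → ℝ}
    (hf : ContinuousOn f (Set.Icc 0 1)) (hx : IsGrid x n) (hy : IsGrid y (n + m))
    (hagree : ∀ i ≤ n, y i = x i) (A : Matrix (Fin n) (Fin n) ℝ) (hA : A = stiff ε b c x n)
    (hAdet : A.det ≠ 0) (Un : ℕ → ℝ)
    (hUn : A *ᵥ (fun j : Fin n => Un ((j : ℕ) + 1)) = fun j : Fin n => load f x ((j : ℕ) + 1))
    (w : ℕ → ℝ) (hw : IsGalerkinSol ε b c f y (n + m) w) :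
    (fun j : Fin n => Un ((j : ℕ) + 1) - w ((j : ℕ) + 1))
      = (∑ k ∈ Finset.Icc 1 m, (w (n + k) - (1 - y (n + k)) / (1 - x n) * w n)
            * bform ε b c (hatFn y (n + k)) (hatDeriv y (n + k)) (hatFn x n) (hatDeriv x n))
          • (A⁻¹ *ᵥ (fun j : Fin n => if (j : ℕ) = n - 1 then 1 else 0)) := by
  -- Galerkin equations on the refined grid, truncated
  have hG : ∀ j, 1 ≤ j → j ≤ n + m →
      ∑ i ∈ Finset.Icc 1 n, w i * (bform ε b c (hatFn y (i)) (hatDeriv y (i)) (hatFn y (j)) (hatDeriv y (j)))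
        = load f y j - ∑ k ∈ Finset.Icc 1 m, w (n + k) * (bform ε b c (hatFn y (n + k)) (hatDeriv y (n + k)) (hatFn y (j)) (hatDeriv y (j))) := by
    intro j h1 h2
    have h3 := hw j h1 h2
    rw [sum_shift n m (fun i => w i * (bform ε b c (hatFn y (i)) (hatDeriv y (i)) (hatFn y (j)) (hatDeriv y (j))))] at h3
    linarith [h3]
  have hER : ∀ i, 1 ≤ i → i ≤ n + m →
      (bform ε b c (hatFn y (i)) (hatDeriv y (i)) (hatFn x n) (hatDeriv x n))
        = (bform ε b c (hatFn y (i)) (hatDeriv y (i)) (hatFn y (n)) (hatDeriv y (n))) + ∑ k ∈ Finset.Icc 1 m, (1 - y (n + k)) / (1 - x n) * (bform ε b c (hatFn y (i)) (hatDeriv y (i)) (hatFn y (n + k)) (hatDeriv y (n + k))) := by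
    intro i h1 h2
    obtain ⟨M, hM⟩ := hatDeriv_bd y i
    exact bform_expand_right hn hm hx hy hagree (hatFn_meas y i) (hatDeriv_meas y i)
      (hatFn_bd y i) hM
  have hEL : ∀ j, 1 ≤ j → j ≤ n + m →
      (bform ε b c (hatFn x n) (hatDeriv x n) (hatFn y j) (hatDeriv y j))
        = (bform ε b c (hatFn y (n)) (hatDeriv y (n)) (hatFn y (j)) (hatDeriv y (j))) + ∑ l ∈ Finset.Icc 1 m, (1 - y (n + l)) / (1 - x n) * (bform ε b c (hatFn y (n + l)) (hatDeriv y (n + l)) (hatFn y (j)) (hatDeriv y (j))) := by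
    intro j h1 h2
    obtain ⟨M, hM⟩ := hatDeriv_bd y j
    exact bform_expand_left hn hm hx hy hagree (hatFn_meas y j) (hatDeriv_meas y j)
      (hatFn_bd y j) hM
  set C : ℝ := ∑ k ∈ Finset.Icc 1 m, (w (n + k) - (1 - y (n + k)) / (1 - x n) * w n)
      * bform ε b c (hatFn y (n + k)) (hatDeriv y (n + k)) (hatFn x n) (hatDeriv x n) with hC
  have hstep : ∀ j, 1 ≤ j → j ≤ n →
      ∑ i ∈ Finset.Icc 1 n,
          w i * bform ε b c (hatFn x i) (hatDeriv x i) (hatFn x j) (hatDeriv x j)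
        = load f x j - (if j = n then C else 0) := by
    intro j h1 h2
    rcases Nat.lt_or_ge j n with hjn | hjn
    · -- case j < n
      rw [if_neg (by omega), sub_zero]
      have hfc := hatFn_congr hagree (show j + 1 ≤ n by omega)
      have hterm : ∀ i ∈ Finset.Icc 1 n,
          w i * bform ε b c (hatFn x i) (hatDeriv x i) (hatFn x j) (hatDeriv x j)
            = w i * (bform ε b c (hatFn y (i)) (hatDeriv y (i)) (hatFn y (j)) (hatDeriv y (j))) := by
        intro i hi
        simp only [Finset.mem_Icc] at hi
        congr 1
        rw [← hfc.1, ← hfc.2]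
        rcases Nat.lt_or_ge i n with hin | hin
        · have hfci := hatFn_congr hagree (show i + 1 ≤ n by omega)
          rw [← hfci.1, ← hfci.2]
        · have hin' : i = n := by omega
          subst i
          have hz : ∑ l ∈ Finset.Icc 1 m, (1 - y (n + l)) / (1 - x n) * (bform ε b c (hatFn y (n + l)) (hatDeriv y (n + l)) (hatFn y (j)) (hatDeriv y (j))) = 0 := by
            refine Finset.sum_eq_zero fun l hl => ?_
            simp only [Finset.mem_Icc] at hl
            rw [bform_disjoint hy (by omega) (by omega) (by omega) (by omega)
              (Or.inr (by omega)), mul_zero]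
          rw [hEL j (by omega) (by omega), hz, add_zero]
      rw [Finset.sum_congr rfl hterm, hG j h1 (by omega)]
      have hz2 : ∑ k ∈ Finset.Icc 1 m, w (n + k) * (bform ε b c (hatFn y (n + k)) (hatDeriv y (n + k)) (hatFn y (j)) (hatDeriv y (j))) = 0 := by
        refine Finset.sum_eq_zero fun k hk => ?_
        simp only [Finset.mem_Icc] at hk
        rw [bform_disjoint hy (by omega) (by omega) (by omega) (by omega)
          (Or.inr (by omega)), mul_zero]
      rw [hz2, sub_zero]
      unfold load
      congr 1
      funext t
      rw [hfc.1]
    · -- case j = n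
      have hjn' : j = n := by omega
      subst j
      rw [if_pos rfl]
      -- swap lemma for double sums
      have hsw : ∀ g : ℕ → ℕ → ℝ,
          ∑ k ∈ Finset.Icc 1 m, (1 - y (n + k)) / (1 - x n) * ∑ l ∈ Finset.Icc 1 m, g l k
            = ∑ l ∈ Finset.Icc 1 m, ∑ k ∈ Finset.Icc 1 m, (1 - y (n + k)) / (1 - x n) * g l k := by
        intro g
        simp only [Finset.mul_sum]
        exact Finset.sum_comm
      have hterm : ∀ i ∈ Finset.Icc 1 n,
          w i * bform ε b c (hatFn x i) (hatDeriv x i) (hatFn x n) (hatDeriv x n)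
            = w i * ((bform ε b c (hatFn y (i)) (hatDeriv y (i)) (hatFn y (n)) (hatDeriv y (n))) + ∑ k ∈ Finset.Icc 1 m, (1 - y (n + k)) / (1 - x n) * (bform ε b c (hatFn y (i)) (hatDeriv y (i)) (hatFn y (n + k)) (hatDeriv y (n + k))))
              + (if i = n then
                  w n * ∑ l ∈ Finset.Icc 1 m, (1 - y (n + l)) / (1 - x n) *
                    ((bform ε b c (hatFn y (n + l)) (hatDeriv y (n + l)) (hatFn y (n)) (hatDeriv y (n))) + ∑ k ∈ Finset.Icc 1 m, (1 - y (n + k)) / (1 - x n) * (bform ε b c (hatFn y (n + l)) (hatDeriv y (n + l)) (hatFn y (n + k)) (hatDeriv y (n + k))))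
                else 0) := by
        intro i hi
        simp only [Finset.mem_Icc] at hi
        rcases Nat.lt_or_ge i n with hin | hin
        · rw [if_neg (by omega), add_zero]
          congr 1
          have hfci := hatFn_congr hagree (show i + 1 ≤ n by omega)
          rw [← hfci.1, ← hfci.2]
          exact hER i (by omega) (by omega)
        · have hin' : i = n := by omega
          subst i
          rw [if_pos rfl]
          have e1 : bform ε b c (hatFn x n) (hatDeriv x n) (hatFn x n) (hatDeriv x n)
              = ((bform ε b c (hatFn y (n)) (hatDeriv y (n)) (hatFn y (n)) (hatDeriv y (n))) + ∑ l ∈ Finset.Icc 1 m, (1 - y (n + l)) / (1 - x n) * (bform ε b c (hatFn y (n + l)) (hatDeriv y (n + l)) (hatFn y (n)) (hatDeriv y (n))))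
                + ∑ k ∈ Finset.Icc 1 m, (1 - y (n + k)) / (1 - x n) *
                    ((bform ε b c (hatFn y (n)) (hatDeriv y (n)) (hatFn y (n + k)) (hatDeriv y (n + k))) + ∑ l ∈ Finset.Icc 1 m, (1 - y (n + l)) / (1 - x n) * (bform ε b c (hatFn y (n + l)) (hatDeriv y (n + l)) (hatFn y (n + k)) (hatDeriv y (n + k)))) := by
            obtain ⟨M, hM⟩ := hatDeriv_bd x n
            rw [bform_expand_right hn hm hx hy hagree (ε := ε) (b := b) (c := c)
              (hatFn_meas x n) (hatDeriv_meas x n) (hatFn_bd x n) hM]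
            rw [hEL n (by omega) (by omega)]
            congr 1
            refine Finset.sum_congr rfl fun k hk => ?_
            simp only [Finset.mem_Icc] at hk
            rw [hEL (n + k) (by omega) (by omega)]
          rw [e1]
          have hsplit1 : ∑ k ∈ Finset.Icc 1 m, (1 - y (n + k)) / (1 - x n) *
                ((bform ε b c (hatFn y (n)) (hatDeriv y (n)) (hatFn y (n + k)) (hatDeriv y (n + k))) + ∑ l ∈ Finset.Icc 1 m, (1 - y (n + l)) / (1 - x n) * (bform ε b c (hatFn y (n + l)) (hatDeriv y (n + l)) (hatFn y (n + k)) (hatDeriv y (n + k))))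
              = (∑ k ∈ Finset.Icc 1 m, (1 - y (n + k)) / (1 - x n) * (bform ε b c (hatFn y (n)) (hatDeriv y (n)) (hatFn y (n + k)) (hatDeriv y (n + k))))
                + ∑ k ∈ Finset.Icc 1 m, (1 - y (n + k)) / (1 - x n) *
                    ∑ l ∈ Finset.Icc 1 m, (1 - y (n + l)) / (1 - x n) * (bform ε b c (hatFn y (n + l)) (hatDeriv y (n + l)) (hatFn y (n + k)) (hatDeriv y (n + k))) := by
            rw [← Finset.sum_add_distrib]
            exact Finset.sum_congr rfl fun k _ => by ring
          have hsplit2 : ∑ l ∈ Finset.Icc 1 m, (1 - y (n + l)) / (1 - x n) *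
                ((bform ε b c (hatFn y (n + l)) (hatDeriv y (n + l)) (hatFn y (n)) (hatDeriv y (n))) + ∑ k ∈ Finset.Icc 1 m, (1 - y (n + k)) / (1 - x n) * (bform ε b c (hatFn y (n + l)) (hatDeriv y (n + l)) (hatFn y (n + k)) (hatDeriv y (n + k))))
              = (∑ l ∈ Finset.Icc 1 m, (1 - y (n + l)) / (1 - x n) * (bform ε b c (hatFn y (n + l)) (hatDeriv y (n + l)) (hatFn y (n)) (hatDeriv y (n))))
                + ∑ l ∈ Finset.Icc 1 m, (1 - y (n + l)) / (1 - x n) *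
                    ∑ k ∈ Finset.Icc 1 m, (1 - y (n + k)) / (1 - x n) * (bform ε b c (hatFn y (n + l)) (hatDeriv y (n + l)) (hatFn y (n + k)) (hatDeriv y (n + k))) := by
            rw [← Finset.sum_add_distrib]
            exact Finset.sum_congr rfl fun l _ => by ring
          have hsw1 : ∑ k ∈ Finset.Icc 1 m, (1 - y (n + k)) / (1 - x n) *
                ∑ l ∈ Finset.Icc 1 m, (1 - y (n + l)) / (1 - x n) * (bform ε b c (hatFn y (n + l)) (hatDeriv y (n + l)) (hatFn y (n + k)) (hatDeriv y (n + k)))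
              = ∑ l ∈ Finset.Icc 1 m, (1 - y (n + l)) / (1 - x n) *
                ∑ k ∈ Finset.Icc 1 m, (1 - y (n + k)) / (1 - x n) * (bform ε b c (hatFn y (n + l)) (hatDeriv y (n + l)) (hatFn y (n + k)) (hatDeriv y (n + k))) := by
            rw [hsw (fun l k => (1 - y (n + l)) / (1 - x n) * (bform ε b c (hatFn y (n + l)) (hatDeriv y (n + l)) (hatFn y (n + k)) (hatDeriv y (n + k))))]
            refine Finset.sum_congr rfl fun l _ => ?_
            rw [Finset.mul_sum]
            exact Finset.sum_congr rfl fun k _ => by ring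
          rw [hsplit1, hsplit2, hsw1]
          ring
      rw [Finset.sum_congr rfl hterm, Finset.sum_add_distrib]
      have hite : ∑ i ∈ Finset.Icc 1 n, (if i = n then
            w n * ∑ l ∈ Finset.Icc 1 m, (1 - y (n + l)) / (1 - x n) *
              ((bform ε b c (hatFn y (n + l)) (hatDeriv y (n + l)) (hatFn y (n)) (hatDeriv y (n))) + ∑ k ∈ Finset.Icc 1 m, (1 - y (n + k)) / (1 - x n) * (bform ε b c (hatFn y (n + l)) (hatDeriv y (n + l)) (hatFn y (n + k)) (hatDeriv y (n + k))))
          else 0)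
          = w n * ∑ l ∈ Finset.Icc 1 m, (1 - y (n + l)) / (1 - x n) *
              ((bform ε b c (hatFn y (n + l)) (hatDeriv y (n + l)) (hatFn y (n)) (hatDeriv y (n))) + ∑ k ∈ Finset.Icc 1 m, (1 - y (n + k)) / (1 - x n) * (bform ε b c (hatFn y (n + l)) (hatDeriv y (n + l)) (hatFn y (n + k)) (hatDeriv y (n + k)))) := by
        rw [Finset.sum_ite_eq' (Finset.Icc 1 n) n]
        simp [Finset.mem_Icc, hn]
      rw [hite]
      have hA1 : ∑ i ∈ Finset.Icc 1 n,
            w i * ((bform ε b c (hatFn y (i)) (hatDeriv y (i)) (hatFn y (n)) (hatDeriv y (n))) + ∑ k ∈ Finset.Icc 1 m, (1 - y (n + k)) / (1 - x n) * (bform ε b c (hatFn y (i)) (hatDeriv y (i)) (hatFn y (n + k)) (hatDeriv y (n + k))))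
          = (∑ i ∈ Finset.Icc 1 n, w i * (bform ε b c (hatFn y (i)) (hatDeriv y (i)) (hatFn y (n)) (hatDeriv y (n))))
            + ∑ k ∈ Finset.Icc 1 m, (1 - y (n + k)) / (1 - x n) * ∑ i ∈ Finset.Icc 1 n, w i * (bform ε b c (hatFn y (i)) (hatDeriv y (i)) (hatFn y (n + k)) (hatDeriv y (n + k))) := by
        have h1 : ∀ i ∈ Finset.Icc 1 n,
            w i * ((bform ε b c (hatFn y (i)) (hatDeriv y (i)) (hatFn y (n)) (hatDeriv y (n))) + ∑ k ∈ Finset.Icc 1 m, (1 - y (n + k)) / (1 - x n) * (bform ε b c (hatFn y (i)) (hatDeriv y (i)) (hatFn y (n + k)) (hatDeriv y (n + k))))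
              = w i * (bform ε b c (hatFn y (i)) (hatDeriv y (i)) (hatFn y (n)) (hatDeriv y (n)))
                + ∑ k ∈ Finset.Icc 1 m, (1 - y (n + k)) / (1 - x n) * (w i * (bform ε b c (hatFn y (i)) (hatDeriv y (i)) (hatFn y (n + k)) (hatDeriv y (n + k)))) := by
          intro i _
          rw [mul_add, Finset.mul_sum]
          congr 1
          exact Finset.sum_congr rfl fun k _ => by ring
        rw [Finset.sum_congr rfl h1, Finset.sum_add_distrib]
        congr 1
        rw [Finset.sum_comm]
        exact Finset.sum_congr rfl fun k _ => (Finset.mul_sum _ _ _).symm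
      rw [hA1, hG n (by omega) (by omega)]
      have hA2 : ∀ k ∈ Finset.Icc 1 m,
          (1 - y (n + k)) / (1 - x n) * ∑ i ∈ Finset.Icc 1 n, w i * (bform ε b c (hatFn y (i)) (hatDeriv y (i)) (hatFn y (n + k)) (hatDeriv y (n + k)))
            = (1 - y (n + k)) / (1 - x n) * (load f y (n + k)
                - ∑ l ∈ Finset.Icc 1 m, w (n + l) * (bform ε b c (hatFn y (n + l)) (hatDeriv y (n + l)) (hatFn y (n + k)) (hatDeriv y (n + k)))) := by
        intro k hk
        simp only [Finset.mem_Icc] at hk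
        rw [hG (n + k) (by omega) (by omega)]
      rw [Finset.sum_congr rfl hA2]
      rw [load_expand hf hn hm hx hy hagree]
      have hCeq : C = ∑ l ∈ Finset.Icc 1 m, (w (n + l) - (1 - y (n + l)) / (1 - x n) * w n)
          * ((bform ε b c (hatFn y (n + l)) (hatDeriv y (n + l)) (hatFn y (n)) (hatDeriv y (n))) + ∑ k ∈ Finset.Icc 1 m, (1 - y (n + k)) / (1 - x n) * (bform ε b c (hatFn y (n + l)) (hatDeriv y (n + l)) (hatFn y (n + k)) (hatDeriv y (n + k)))) := by
        rw [hC]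
        refine Finset.sum_congr rfl fun l hl => ?_
        simp only [Finset.mem_Icc] at hl
        rw [hER (n + l) (by omega) (by omega)]
      rw [hCeq]
      have hsplit3 : ∑ k ∈ Finset.Icc 1 m, (1 - y (n + k)) / (1 - x n) * (load f y (n + k)
            - ∑ l ∈ Finset.Icc 1 m, w (n + l) * (bform ε b c (hatFn y (n + l)) (hatDeriv y (n + l)) (hatFn y (n + k)) (hatDeriv y (n + k))))
          = (∑ k ∈ Finset.Icc 1 m, (1 - y (n + k)) / (1 - x n) * load f y (n + k))
            - ∑ k ∈ Finset.Icc 1 m, (1 - y (n + k)) / (1 - x n) *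
                ∑ l ∈ Finset.Icc 1 m, w (n + l) * (bform ε b c (hatFn y (n + l)) (hatDeriv y (n + l)) (hatFn y (n + k)) (hatDeriv y (n + k))) := by
        rw [← Finset.sum_sub_distrib]
        exact Finset.sum_congr rfl fun k _ => by ring
      rw [hsplit3]
      have hsw2 : ∑ k ∈ Finset.Icc 1 m, (1 - y (n + k)) / (1 - x n) *
            ∑ l ∈ Finset.Icc 1 m, w (n + l) * (bform ε b c (hatFn y (n + l)) (hatDeriv y (n + l)) (hatFn y (n + k)) (hatDeriv y (n + k)))
          = ∑ l ∈ Finset.Icc 1 m, w (n + l) *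
            ∑ k ∈ Finset.Icc 1 m, (1 - y (n + k)) / (1 - x n) * (bform ε b c (hatFn y (n + l)) (hatDeriv y (n + l)) (hatFn y (n + k)) (hatDeriv y (n + k))) := by
        rw [hsw (fun l k => w (n + l) * (bform ε b c (hatFn y (n + l)) (hatDeriv y (n + l)) (hatFn y (n + k)) (hatDeriv y (n + k))))]
        refine Finset.sum_congr rfl fun l _ => ?_
        rw [Finset.mul_sum]
        exact Finset.sum_congr rfl fun k _ => by ring
      rw [hsw2]
      have hfin : ∑ l ∈ Finset.Icc 1 m, (w (n + l) - (1 - y (n + l)) / (1 - x n) * w n)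
            * ((bform ε b c (hatFn y (n + l)) (hatDeriv y (n + l)) (hatFn y (n)) (hatDeriv y (n))) + ∑ k ∈ Finset.Icc 1 m, (1 - y (n + k)) / (1 - x n) * (bform ε b c (hatFn y (n + l)) (hatDeriv y (n + l)) (hatFn y (n + k)) (hatDeriv y (n + k))))
          = (∑ l ∈ Finset.Icc 1 m, w (n + l) * (bform ε b c (hatFn y (n + l)) (hatDeriv y (n + l)) (hatFn y (n)) (hatDeriv y (n))))
            + (∑ l ∈ Finset.Icc 1 m, w (n + l) *
                ∑ k ∈ Finset.Icc 1 m, (1 - y (n + k)) / (1 - x n) * (bform ε b c (hatFn y (n + l)) (hatDeriv y (n + l)) (hatFn y (n + k)) (hatDeriv y (n + k))))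
            - w n * ∑ l ∈ Finset.Icc 1 m, (1 - y (n + l)) / (1 - x n) *
                ((bform ε b c (hatFn y (n + l)) (hatDeriv y (n + l)) (hatFn y (n)) (hatDeriv y (n))) + ∑ k ∈ Finset.Icc 1 m, (1 - y (n + k)) / (1 - x n) * (bform ε b c (hatFn y (n + l)) (hatDeriv y (n + l)) (hatFn y (n + k)) (hatDeriv y (n + k)))) := by
        rw [Finset.mul_sum, ← Finset.sum_add_distrib, ← Finset.sum_sub_distrib]
        exact Finset.sum_congr rfl fun l _ => by ring
      rw [hfin]
      ring
  -- matrix conclusion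
  have hAw : A *ᵥ (fun j : Fin n => w ((j : ℕ) + 1))
      = fun j : Fin n => load f x ((j : ℕ) + 1) - (if ((j : ℕ) + 1) = n then C else 0) := by
    funext j
    have hj := j.isLt
    show ∑ i : Fin n, A j i * w ((i : ℕ) + 1) = _
    have hAe : ∀ i : Fin n, A j i * w ((i : ℕ) + 1)
        = w ((i : ℕ) + 1) * bform ε b c (hatFn x ((i : ℕ) + 1)) (hatDeriv x ((i : ℕ) + 1))
            (hatFn x ((j : ℕ) + 1)) (hatDeriv x ((j : ℕ) + 1)) := by
      intro i
      rw [hA]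
      unfold stiff
      ring
    rw [Finset.sum_congr rfl (fun i _ => hAe i)]
    rw [fin_sum_shift n (fun i => w i * bform ε b c (hatFn x i) (hatDeriv x i)
      (hatFn x ((j : ℕ) + 1)) (hatDeriv x ((j : ℕ) + 1)))]
    exact hstep ((j : ℕ) + 1) (by omega) (by omega)
  have hdiff : A *ᵥ ((fun j : Fin n => Un ((j : ℕ) + 1)) - (fun j : Fin n => w ((j : ℕ) + 1)))
      = C • (fun j : Fin n => if (j : ℕ) = n - 1 then (1:ℝ) else 0) := by
    rw [Matrix.mulVec_sub, hUn, hAw]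
    funext j
    have hj := j.isLt
    simp only [Pi.sub_apply, Pi.smul_apply, smul_eq_mul]
    by_cases hjeq : ((j : ℕ) + 1) = n
    · rw [if_pos hjeq, if_pos (by omega)]
      ring
    · rw [if_neg hjeq, if_neg (by omega)]
      ring
  have hinv : A⁻¹ * A = 1 := Matrix.nonsing_inv_mul A (isUnit_iff_ne_zero.mpr hAdet)
  have hfinal : (fun j : Fin n => Un ((j : ℕ) + 1)) - (fun j : Fin n => w ((j : ℕ) + 1))
      = C • (A⁻¹ *ᵥ (fun j : Fin n => if (j : ℕ) = n - 1 then 1 else 0)) := by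
    calc (fun j : Fin n => Un ((j : ℕ) + 1)) - (fun j : Fin n => w ((j : ℕ) + 1))
        = (A⁻¹ * A) *ᵥ ((fun j : Fin n => Un ((j : ℕ) + 1)) - (fun j : Fin n => w ((j : ℕ) + 1))) := by
          rw [hinv, Matrix.one_mulVec]
      _ = A⁻¹ *ᵥ (A *ᵥ ((fun j : Fin n => Un ((j : ℕ) + 1)) - (fun j : Fin n => w ((j : ℕ) + 1)))) := by
          rw [← Matrix.mulVec_mulVec]
      _ = A⁻¹ *ᵥ (C • (fun j : Fin n => if (j : ℕ) = n - 1 then (1:ℝ) else 0)) := by rw [hdiff]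
      _ = C • (A⁻¹ *ᵥ (fun j : Fin n => if (j : ℕ) = n - 1 then 1 else 0)) := by
          rw [Matrix.mulVec_smul]
  rw [← hfinal]
  rfl

end Key

set_option maxHeartbeats 1000000 in
/-- Theorem 3.2: if `w` solves the refined Galerkin system on the grid `y`
obtained from `x` by inserting `m` points `s_k = y (n+k)` in `(xₙ, 1)`, then
`Uⁿ − (u₁, …, uₙ) = C·A⁻¹eₙ` with `C = Σ_{k=1}^m (u_{s_k} − p_k·uₙ)·a(φ_{s_k}, φₙ)` and
`p_k = (1 − s_k)/(1 − xₙ)`; the same holds for a second refinement `(y', m', w')`, and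
consequently for each `2 ≤ i ≤ n` where the nodal differences change sign (for both
refinements) the intersection point of the two piecewise linear solutions in
`(x_{i−1}, xᵢ)` is independent of `m` and of the distribution of the added points. -/
theorem statement8 (n m m' : ℕ) (hn : 1 ≤ n) (hm : 1 ≤ m) (hm' : 1 ≤ m')
    (x y y' : ℕ → ℝ) (ε b c : ℝ) (f : ℝ → ℝ)
    (hf : ContinuousOn f (Set.Icc 0 1))
    (hx : IsGrid x n) (hy : IsGrid y (n + m)) (hy' : IsGrid y' (n + m'))
    (hagree : ∀ i ≤ n, y i = x i) (hagree' : ∀ i ≤ n, y' i = x i)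
    (A : Matrix (Fin n) (Fin n) ℝ) (hA : A = stiff ε b c x n) (hAdet : A.det ≠ 0)
    (Un : ℕ → ℝ)
    (hUn : A *ᵥ (fun j : Fin n => Un ((j : ℕ) + 1))
      = fun j : Fin n => load f x ((j : ℕ) + 1))
    (w w' : ℕ → ℝ)
    (hw : IsGalerkinSol ε b c f y (n + m) w)
    (hw' : IsGalerkinSol ε b c f y' (n + m') w') :
    ((fun j : Fin n => Un ((j : ℕ) + 1) - w ((j : ℕ) + 1))
        = (∑ k ∈ Finset.Icc 1 m,
              (w (n + k) - (1 - y (n + k)) / (1 - x n) * w n)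
                * bform ε b c (hatFn y (n + k)) (hatDeriv y (n + k))
                    (hatFn x n) (hatDeriv x n))
            • (A⁻¹ *ᵥ (fun j : Fin n => if (j : ℕ) = n - 1 then 1 else 0))) ∧
    ((fun j : Fin n => Un ((j : ℕ) + 1) - w' ((j : ℕ) + 1))
        = (∑ k ∈ Finset.Icc 1 m',
              (w' (n + k) - (1 - y' (n + k)) / (1 - x n) * w' n)
                * bform ε b c (hatFn y' (n + k)) (hatDeriv y' (n + k))
                    (hatFn x n) (hatDeriv x n))
            • (A⁻¹ *ᵥ (fun j : Fin n => if (j : ℕ) = n - 1 then 1 else 0))) ∧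
    (∀ i : ℕ, 2 ≤ i → i ≤ n →
      (Un (i - 1) - w (i - 1)) * (Un i - w i) < 0 →
      (Un (i - 1) - w' (i - 1)) * (Un i - w' i) < 0 →
      ∃ t ∈ Set.Ioo (x (i - 1)) (x i),
        affInterp (x (i - 1)) (x i) (Un (i - 1)) (Un i) t
          = affInterp (x (i - 1)) (x i) (w (i - 1)) (w i) t ∧
        affInterp (x (i - 1)) (x i) (Un (i - 1)) (Un i) t
          = affInterp (x (i - 1)) (x i) (w' (i - 1)) (w' i) t ∧
        ∀ t' ∈ Set.Ioo (x (i - 1)) (x i),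
          (affInterp (x (i - 1)) (x i) (Un (i - 1)) (Un i) t'
              = affInterp (x (i - 1)) (x i) (w (i - 1)) (w i) t' ∨
            affInterp (x (i - 1)) (x i) (Un (i - 1)) (Un i) t'
              = affInterp (x (i - 1)) (x i) (w' (i - 1)) (w' i) t') → t' = t) := by
  have h1 := key hn hm hf hx hy hagree A hA hAdet Un hUn w hw
  have h2 := key hn hm' hf hx hy' hagree' A hA hAdet Un hUn w' hw'
  refine ⟨h1, h2, ?_⟩
  intro i h2i hin hsgn hsgn'
  set v : Fin n → ℝ := A⁻¹ *ᵥ (fun j : Fin n => if (j : ℕ) = n - 1 then 1 else 0) with hv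
  set C : ℝ := ∑ k ∈ Finset.Icc 1 m,
      (w (n + k) - (1 - y (n + k)) / (1 - x n) * w n)
        * bform ε b c (hatFn y (n + k)) (hatDeriv y (n + k))
            (hatFn x n) (hatDeriv x n) with hCdef
  set C' : ℝ := ∑ k ∈ Finset.Icc 1 m',
      (w' (n + k) - (1 - y' (n + k)) / (1 - x n) * w' n)
        * bform ε b c (hatFn y' (n + k)) (hatDeriv y' (n + k))
            (hatFn x n) (hatDeriv x n) with hCdef'
  have hcoord : ∀ (Cz : ℝ) (z : ℕ → ℝ),
      ((fun j : Fin n => Un ((j : ℕ) + 1) - z ((j : ℕ) + 1)) = Cz • v) →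
      ∀ jF : Fin n, Un ((jF : ℕ) + 1) - z ((jF : ℕ) + 1) = Cz * v jF := by
    intro Cz z hz jF
    have hcf := congrFun hz jF
    simpa only [Pi.smul_apply, smul_eq_mul] using hcf
  have e1 : Un (i - 1 - 1 + 1) - w (i - 1 - 1 + 1) = C * v ⟨i - 1 - 1, by omega⟩ :=
    hcoord C w h1 ⟨i - 1 - 1, by omega⟩
  have e2 : Un (i - 1 + 1) - w (i - 1 + 1) = C * v ⟨i - 1, by omega⟩ :=
    hcoord C w h1 ⟨i - 1, by omega⟩
  have e1' : Un (i - 1 - 1 + 1) - w' (i - 1 - 1 + 1) = C' * v ⟨i - 1 - 1, by omega⟩ :=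
    hcoord C' w' h2 ⟨i - 1 - 1, by omega⟩
  have e2' : Un (i - 1 + 1) - w' (i - 1 + 1) = C' * v ⟨i - 1, by omega⟩ :=
    hcoord C' w' h2 ⟨i - 1, by omega⟩
  rw [show i - 1 - 1 + 1 = i - 1 by omega] at e1 e1'
  rw [show i - 1 + 1 = i by omega] at e2 e2'
  clear_value v C C'
  clear h1 h2 hw hw' hUn hf hagree hagree' hy hy' hA hAdet hcoord hCdef hCdef' hv
  set v1 : ℝ := v ⟨i - 1 - 1, by omega⟩ with hv1
  set v2 : ℝ := v ⟨i - 1, by omega⟩ with hv2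
  rw [e1, e2] at hsgn
  rw [e1', e2'] at hsgn'
  have hv12 : v1 * v2 < 0 := by nlinarith [sq_nonneg C]
  have hCne : C ≠ 0 := by intro h; rw [h] at hsgn; simp at hsgn
  have hCne' : C' ≠ 0 := by intro h; rw [h] at hsgn'; simp at hsgn'
  have hv1ne : v1 ≠ 0 := by intro h; rw [h] at hv12; simp at hv12
  have hvne : v1 - v2 ≠ 0 := by
    intro h
    have hvv : v1 = v2 := by linarith
    rw [hvv] at hv12
    nlinarith
  have hab : x (i - 1) < x i := by
    have h := hx.2.2 (i - 1) (by omega)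
    rwa [show i - 1 + 1 = i by omega] at h
  set α : ℝ := x (i - 1) with hα
  set β : ℝ := x i with hβ
  have hba : β - α ≠ 0 := by simp only [hα, hβ]; intro h; nlinarith
  set r : ℝ := v1 / (v1 - v2) with hr
  have hr0 : 0 < r := by
    rcases lt_or_gt_of_ne hv1ne with h | h
    · have hv2 : 0 < v2 := by nlinarith
      rw [hr, ← neg_div_neg_eq]
      exact div_pos (by linarith) (by linarith)
    · have hv2 : v2 < 0 := by nlinarith
      exact div_pos h (by linarith)
  have hr1 : r < 1 := by
    rcases lt_or_gt_of_ne hv1ne with h | h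
    · have hv2 : 0 < v2 := by nlinarith
      rw [hr, ← neg_div_neg_eq, div_lt_one (by linarith)]
      linarith
    · have hv2 : v2 < 0 := by nlinarith
      rw [hr, div_lt_one (by linarith)]
      linarith
  have hUi1 : Un (i - 1) = w (i - 1) + C * v1 := by linarith
  have hUi2 : Un i = w i + C * v2 := by linarith
  have hUi1' : Un (i - 1) = w' (i - 1) + C' * v1 := by linarith
  have hUi2' : Un i = w' i + C' * v2 := by linarith
  have hcan : ∀ X : ℝ, X * (α + (β - α) * r - α) / (β - α) = X * r := by
    intro X
    rw [show α + (β - α) * r - α = (β - α) * r from by ring, mul_comm (β - α) r,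
      ← mul_assoc, mul_div_assoc, div_self hba, mul_one]
  have hzr : v1 + (v2 - v1) * r = 0 := by
    rw [hr]
    field_simp
    ring
  refine ⟨α + (β - α) * r, ⟨by nlinarith, by nlinarith⟩, ?_, ?_, ?_⟩
  · unfold affInterp
    rw [hUi1, hUi2]
    simp only [hcan]
    linear_combination C * hzr
  · unfold affInterp
    rw [hUi1', hUi2']
    simp only [hcan]
    linear_combination C' * hzr
  · rintro t' ⟨ht1, ht2⟩ (h | h)
    · unfold affInterp at h
      rw [hUi1, hUi2] at h
      have hCs : C * (v1 + (v2 - v1) * ((t' - α) / (β - α))) = 0 := by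
        linear_combination h
      have hzs : v1 + (v2 - v1) * ((t' - α) / (β - α)) = 0 :=
        (mul_eq_zero.mp hCs).resolve_left hCne
      have hsr : (t' - α) / (β - α) = r := by
        rw [hr, eq_div_iff hvne]
        linear_combination -hzs
      have ht3 : t' - α = r * (β - α) := (div_eq_iff hba).mp hsr
      linarith
    · unfold affInterp at h
      rw [hUi1', hUi2'] at h
      have hCs : C' * (v1 + (v2 - v1) * ((t' - α) / (β - α))) = 0 := by
        linear_combination h
      have hzs : v1 + (v2 - v1) * ((t' - α) / (β - α)) = 0 :=
        (mul_eq_zero.mp hCs).resolve_left hCne'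
      have hsr : (t' - α) / (β - α) = r := by
        rw [hr, eq_div_iff hvne]
        linear_combination -hzs
      have ht3 : t' - α = r * (β - α) := (div_eq_iff hba).mp hsr
      linarith
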